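/- arXiv:1501.05978 — 2 statements merged into one kernel-verified Lean document; each statement's English description precedes it below -/
import Mathlib

section
/- Let u_1,...,u_n be i.i.d. V-valued random variables whose common distribution is homothety-invariant, and set s_w = u_1 + ... + u_w. Then P[u_1,...,u_n are linearly dependent] ≤ Σ_{w≥1} C(n,w) (q-1)^{w-1} P[s_w = 0]. -/
open MeasureTheory


/-- pushforward of a pi probability measure under restriction to an injective family of
coordinates. -/
theorem pi_map_comp_inj {V : Type*} [MeasurableSpace V] (μ : Measure V) [IsProbabilityMeasure μ]
    {n w : ℕ} (e : Fin w → Fin n) (he : Function.Injective e) :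
    (Measure.pi (fun _ : Fin n => μ)).map (fun f j => f (e j))
      = Measure.pi (fun _ : Fin w => μ) := by
  classical
  have hmeas : Measurable (fun f : Fin n → V => fun j => f (e j)) :=
    measurable_pi_lambda _ fun j => measurable_pi_apply _
  refine (Measure.pi_eq fun s hs => ?_).symm
  rw [Measure.map_apply hmeas (MeasurableSet.univ_pi hs)]
  set t : Fin n → Set V := fun i => if h : ∃ j, e j = i then s h.choose else Set.univ with ht
  have hpre : (fun f : Fin n → V => fun j => f (e j)) ⁻¹' Set.pi Set.univ s
      = Set.pi Set.univ t := by
    ext f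
    simp only [Set.mem_preimage, Set.mem_pi, Set.mem_univ, true_imp_iff, ht]
    constructor
    · intro hf i
      by_cases h : ∃ j, e j = i
      · obtain ⟨j, rfl⟩ := h
        have h : ∃ j', e j' = e j := ⟨j, rfl⟩
        simp only [h, dif_pos]
        have hj : h.choose = j := he h.choose_spec
        rw [hj]
        exact hf j
      · simp [h]
    · intro hf j
      have h : ∃ j', e j' = e j := ⟨j, rfl⟩
      have := hf (e j)
      simp only [h, dif_pos] at this
      have hj : h.choose = j := he h.choose_spec
      rwa [hj] at this
  rw [hpre, Measure.pi_pi]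
  have h1 : ∀ i ∉ Finset.image e Finset.univ, μ (t i) = 1 := by
    intro i hi
    have h : ¬ ∃ j, e j = i := by
      rintro ⟨j, rfl⟩; exact hi (Finset.mem_image_of_mem _ (Finset.mem_univ j))
    simp [ht, h]
  calc ∏ i, μ (t i) = ∏ i ∈ Finset.image e Finset.univ, μ (t i) :=
        (Finset.prod_subset (Finset.subset_univ _) (fun i _ hi => h1 i hi)).symm
    _ = ∏ j, μ (t (e j)) := Finset.prod_image (fun a _ b _ h => he h)
    _ = ∏ j, μ (s j) := by
        refine Finset.prod_congr rfl fun j _ => ?_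
        have h : ∃ j', e j' = e j := ⟨j, rfl⟩
        have hj : h.choose = j := he h.choose_spec
        simp [ht, h, hj]


theorem pi_smul_le {F V : Type*} [Field F] [AddCommGroup V] [Module F V] [MeasurableSpace V]
    (μ : Measure V) [IsProbabilityMeasure μ]
    (hμ : ∀ l : F, l ≠ 0 → μ.map (fun v => l • v) = μ)
    {w : ℕ} (d : Fin w → F) (hd : ∀ j, d j ≠ 0) :
    Measure.pi (fun _ : Fin w => μ) {g : Fin w → V | ∑ j, d j • g j = 0}
      ≤ Measure.pi (fun _ : Fin w => μ) {g : Fin w → V | ∑ j, g j = 0} := by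
  have hae : ∀ j : Fin w, AEMeasurable (fun v : V => d j • v) μ := by
    intro j
    by_contra h
    have h0 := Measure.map_of_not_aemeasurable h
    rw [hμ _ (hd j)] at h0
    exact (IsProbabilityMeasure.ne_zero μ) h0
  set m : Fin w → V → V := fun j => (hae j).mk _ with hm
  have hmeq : ∀ j, (fun v : V => d j • v) =ᵐ[μ] m j := fun j => (hae j).ae_eq_mk
  have hmp : ∀ j, MeasurePreserving (m j) μ μ := by
    intro j
    refine ⟨(hae j).measurable_mk, ?_⟩
    rw [← Measure.map_congr (hmeq j), hμ _ (hd j)]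
  have hΦ : MeasurePreserving (fun g : Fin w → V => fun j => m j (g j))
      (Measure.pi fun _ => μ) (Measure.pi fun _ => μ) :=
    measurePreserving_pi _ _ hmp
  set N : Fin w → Set V := fun j => {v | d j • v ≠ m j v} with hN
  have hNnull : ∀ j, μ (N j) = 0 := fun j => (hmeq j)
  set U : Set (Fin w → V) := ⋃ j, (fun g : Fin w → V => g j) ⁻¹' N j with hU
  have hUnull : Measure.pi (fun _ : Fin w => μ) U = 0 := by
    refine measure_iUnion_null fun j => ?_
    exact Measure.pi_eval_preimage_null _ (hNnull j)
  have hsub : {g : Fin w → V | ∑ j, d j • g j = 0}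
      ⊆ ((fun g : Fin w → V => fun j => m j (g j)) ⁻¹' {g : Fin w → V | ∑ j, g j = 0}) ∪ U := by
    intro g hg
    by_cases hgU : g ∈ U
    · exact Or.inr hgU
    · left
      simp only [Set.mem_preimage, Set.mem_setOf_eq]
      have : ∀ j, m j (g j) = d j • g j := by
        intro j
        by_contra hne
        exact hgU (Set.mem_iUnion.2 ⟨j, fun h => hne h.symm⟩)
      simpa only [this, Set.mem_setOf_eq] using hg
  calc Measure.pi (fun _ : Fin w => μ) {g : Fin w → V | ∑ j, d j • g j = 0}
      ≤ Measure.pi (fun _ : Fin w => μ)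
        (((fun g : Fin w → V => fun j => m j (g j)) ⁻¹' {g : Fin w → V | ∑ j, g j = 0}) ∪ U) :=
        measure_mono hsub
    _ ≤ Measure.pi (fun _ : Fin w => μ)
        ((fun g : Fin w → V => fun j => m j (g j)) ⁻¹' {g : Fin w → V | ∑ j, g j = 0})
        + Measure.pi (fun _ : Fin w => μ) U := measure_union_le _ _
    _ = Measure.pi (fun _ : Fin w => μ)
        ((fun g : Fin w → V => fun j => m j (g j)) ⁻¹' {g : Fin w → V | ∑ j, g j = 0}) := by
        rw [hUnull, add_zero]
    _ ≤ ((Measure.pi (fun _ : Fin w => μ)).map (fun g : Fin w → V => fun j => m j (g j)))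
        {g : Fin w → V | ∑ j, g j = 0} :=
        Measure.le_map_apply hΦ.measurable.aemeasurable _
    _ = Measure.pi (fun _ : Fin w => μ) {g : Fin w → V | ∑ j, g j = 0} := by rw [hΦ.map_eq]


theorem measure_rel_le {F V : Type*} [Field F] [AddCommGroup V] [Module F V] [MeasurableSpace V]
    (μ : Measure V) [IsProbabilityMeasure μ]
    (hμ : ∀ l : F, l ≠ 0 → μ.map (fun v => l • v) = μ)
    {n : ℕ} (S : Finset (Fin n)) (c : Fin n → F) (hc : ∀ i ∈ S, c i ≠ 0)
    (hpi : ∀ {w : ℕ} (e : Fin w → Fin n), Function.Injective e →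
      (Measure.pi (fun _ : Fin n => μ)).map (fun f j => f (e j))
        = Measure.pi (fun _ : Fin w => μ))
    (hsm : ∀ {w : ℕ} (d : Fin w → F), (∀ j, d j ≠ 0) →
      Measure.pi (fun _ : Fin w => μ) {g : Fin w → V | ∑ j, d j • g j = 0}
        ≤ Measure.pi (fun _ : Fin w => μ) {g : Fin w → V | ∑ j, g j = 0}) :
    Measure.pi (fun _ : Fin n => μ) {f : Fin n → V | ∑ i ∈ S, c i • f i = 0}
      ≤ Measure.pi (fun _ : Fin S.card => μ) {g : Fin S.card → V | ∑ j, g j = 0} := by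
  set w := S.card with hw
  set e : Fin w → Fin n := fun j => (S.orderIsoOfFin rfl j : Fin n) with he
  have hinj : Function.Injective e := by
    intro a b hab
    have := (S.orderIsoOfFin rfl).injective (Subtype.ext hab)
    exact this
  have hsum : ∀ f : Fin n → V, ∑ i ∈ S, c i • f i = ∑ j : Fin w, c (e j) • f (e j) := by
    intro f
    rw [← Finset.sum_coe_sort S (fun i => c i • f i)]
    exact (Fintype.sum_equiv (S.orderIsoOfFin rfl).toEquiv _ _ (fun j => rfl)).symm
  have hset : {f : Fin n → V | ∑ i ∈ S, c i • f i = 0}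
      = (fun f : Fin n → V => fun j => f (e j)) ⁻¹' {g : Fin w → V | ∑ j, c (e j) • g j = 0} := by
    ext f
    simp only [Set.mem_setOf_eq, Set.mem_preimage, hsum f]
  rw [hset]
  calc Measure.pi (fun _ : Fin n => μ)
        ((fun f : Fin n → V => fun j => f (e j)) ⁻¹' {g : Fin w → V | ∑ j, c (e j) • g j = 0})
      ≤ ((Measure.pi (fun _ : Fin n => μ)).map (fun f : Fin n → V => fun j => f (e j)))
          {g : Fin w → V | ∑ j, c (e j) • g j = 0} :=
        Measure.le_map_apply (measurable_pi_lambda _ fun j => measurable_pi_apply _).aemeasurable _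
    _ = Measure.pi (fun _ : Fin w => μ) {g : Fin w → V | ∑ j, c (e j) • g j = 0} := by
        rw [hpi e hinj]
    _ ≤ Measure.pi (fun _ : Fin w => μ) {g : Fin w → V | ∑ j, g j = 0} :=
        hsm _ (fun j => hc _ (S.orderIsoOfFin rfl j).2)


theorem fiber_card_le {F : Type*} [Field F] [Fintype F] [DecidableEq F] {n : ℕ}
    (S : Finset (Fin n)) (hS : S.Nonempty) :
    (Finset.univ.filter (fun l : Fin n → F =>
        Finset.univ.filter (fun i => l i ≠ 0) = S ∧ l (S.min' hS) = 1)).card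
      ≤ (Fintype.card F - 1) ^ (S.card - 1) := by
  classical
  set m := S.min' hS with hm
  have hT : (Finset.univ : Finset ({i // i ∈ S.erase m} → {x : F // x ≠ (0:F)})).card
      = (Fintype.card F - 1) ^ (S.card - 1) := by
    rw [Finset.card_univ, Fintype.card_pi, Finset.prod_const]
    have h1 : Fintype.card {x : F // x ≠ (0:F)} = Fintype.card F - 1 := by
      rw [Fintype.card_subtype_compl, Fintype.card_subtype_eq]
    have h2 : (Finset.univ : Finset {i // i ∈ S.erase m}).card = S.card - 1 := by
      rw [Finset.card_univ, Fintype.card_coe, Finset.card_erase_of_mem (S.min'_mem hS)]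
    rw [h1, h2]
  refine le_trans (Finset.card_le_card_of_injOn
    (fun l => fun i : {i // i ∈ S.erase m} =>
      if h : l i.1 ≠ 0 then (⟨l i.1, h⟩ : {x : F // x ≠ (0:F)}) else ⟨1, one_ne_zero⟩)
    (fun l _ => Finset.mem_univ _) ?_) (le_of_eq hT)
  intro l hl l' hl' hll
  simp only [Finset.coe_filter, Finset.mem_coe, Finset.mem_filter, Finset.mem_univ, true_and,
    Set.mem_setOf_eq] at hl hl'
  funext i
  have hmem : ∀ (g : Fin n → F), Finset.univ.filter (fun i => g i ≠ 0) = S →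
      ∀ j : Fin n, (g j ≠ 0 ↔ j ∈ S) := by
    intro g hg j
    rw [← hg]
    simp
  by_cases hiS : i ∈ S
  · by_cases him : i = m
    · rw [him, hl.2, hl'.2]
    · have hi : i ∈ S.erase m := Finset.mem_erase.2 ⟨him, hiS⟩
      have h1 : l i ≠ 0 := (hmem l hl.1 i).2 hiS
      have h2 : l' i ≠ 0 := (hmem l' hl'.1 i).2 hiS
      have h3 := congrFun hll ⟨i, hi⟩
      simp only at h3
      rw [dif_pos h1, dif_pos h2] at h3
      exact congrArg Subtype.val h3
  · have h1 : ¬ l i ≠ 0 := fun h => hiS ((hmem l hl.1 i).1 h)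
    have h2 : ¬ l' i ≠ 0 := fun h => hiS ((hmem l' hl'.1 i).1 h)
    rw [not_not] at h1 h2
    rw [h1, h2]

theorem stmt8_aux {F V : Type*} [Field F] [Fintype F]
    [AddCommGroup V] [Module F V] [MeasurableSpace V]
    (μ : Measure V) [IsProbabilityMeasure μ]
    (hμ : ∀ l : F, l ≠ 0 → μ.map (fun v => l • v) = μ) (n : ℕ)
    (hpi : ∀ {w : ℕ} (e : Fin w → Fin n), Function.Injective e →
      (Measure.pi (fun _ : Fin n => μ)).map (fun f j => f (e j))
        = Measure.pi (fun _ : Fin w => μ))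
    (hrel : ∀ (S : Finset (Fin n)) (c : Fin n → F), (∀ i ∈ S, c i ≠ 0) →
      Measure.pi (fun _ : Fin n => μ) {f : Fin n → V | ∑ i ∈ S, c i • f i = 0}
        ≤ Measure.pi (fun _ : Fin S.card => μ) {g : Fin S.card → V | ∑ j, g j = 0})
    (hcount : ∀ [DecidableEq F] (S : Finset (Fin n)) (hS : S.Nonempty),
      (Finset.univ.filter (fun l : Fin n → F =>
          Finset.univ.filter (fun i => l i ≠ 0) = S ∧ l (S.min' hS) = 1)).card
        ≤ (Fintype.card F - 1) ^ (S.card - 1)) :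
    Measure.pi (fun _ : Fin n => μ)
      {f : Fin n → V | ∃ l : Fin n → F, l ≠ 0 ∧ ∑ i, l i • f i = 0}
    ≤ ∑ w ∈ Finset.Icc 1 n,
        (n.choose w : ENNReal) * ((Fintype.card F - 1 : ℕ) : ENNReal) ^ (w - 1) *
          Measure.pi (fun _ : Fin w => μ) {f : Fin w → V | ∑ i, f i = 0} := by
  classical
  set q := Fintype.card F with hq
  set supp : (Fin n → F) → Finset (Fin n) := fun l => Finset.univ.filter (fun i => l i ≠ 0)
    with hsupp
  set p : ℕ → ENNReal := fun w =>
    Measure.pi (fun _ : Fin w => μ) {g : Fin w → V | ∑ j, g j = 0} with hp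
  set D : Finset (Fin n → F) := Finset.univ.filter
    (fun l => ∃ h : (supp l).Nonempty, l ((supp l).min' h) = 1) with hD
  set E : (Fin n → F) → Set (Fin n → V) := fun l => {f | ∑ i ∈ supp l, l i • f i = 0} with hE
  -- step 1: inclusion in the union
  have hincl : {f : Fin n → V | ∃ l : Fin n → F, l ≠ 0 ∧ ∑ i, l i • f i = 0}
      ⊆ ⋃ l ∈ D, E l := by
    rintro f ⟨l, hl0, hsum⟩
    have hne : (supp l).Nonempty := by
      obtain ⟨i, hi⟩ := Function.ne_iff.1 hl0
      have hi' : l i ≠ 0 := hi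
      exact ⟨i, by simp [hsupp, hi']⟩
    set i₀ := (supp l).min' hne with hi₀
    have hli₀ : l i₀ ≠ 0 := by
      have := (supp l).min'_mem hne
      simpa [hsupp] using this
    set c := (l i₀)⁻¹ with hc
    have hc0 : c ≠ 0 := inv_ne_zero hli₀
    set l' : Fin n → F := fun i => c * l i with hl'
    have hsupp' : supp l' = supp l := by
      ext i
      simp [hsupp, hl', mul_ne_zero_iff, hc0]
    have hl'D : l' ∈ D := by
      refine Finset.mem_filter.2 ⟨Finset.mem_univ _, ?_⟩
      refine ⟨hsupp' ▸ hne, ?_⟩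
      have hmin : (supp l').min' (hsupp' ▸ hne) = i₀ := by
        simp only [hsupp', hi₀]
      rw [hmin]
      simp [hl', hc, inv_mul_cancel₀ hli₀]
    refine Set.mem_biUnion hl'D ?_
    show ∑ i ∈ supp l', l' i • f i = 0
    rw [hsupp']
    have h2 : ∑ i ∈ supp l, l i • f i = 0 := by
      rw [← hsum]
      refine Finset.sum_subset (Finset.subset_univ _) ?_
      intro i _ hi
      have : l i = 0 := by simpa [hsupp] using hi
      simp [this]
    calc ∑ i ∈ supp l, l' i • f i = c • ∑ i ∈ supp l, l i • f i := by
          rw [Finset.smul_sum]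
          exact Finset.sum_congr rfl fun i _ => by rw [hl', mul_smul]
      _ = 0 := by rw [h2, smul_zero]
  -- step 2,3
  have hstep2 : Measure.pi (fun _ : Fin n => μ)
      {f : Fin n → V | ∃ l : Fin n → F, l ≠ 0 ∧ ∑ i, l i • f i = 0}
      ≤ ∑ l ∈ D, p (supp l).card := by
    refine le_trans (measure_mono hincl) ?_
    refine le_trans (measure_biUnion_finset_le D E) ?_
    refine Finset.sum_le_sum fun l _ => ?_
    exact hrel (supp l) l (fun i hi => by simpa [hsupp] using hi)
  -- step 4: fiberwise
  have hmaps : ∀ l ∈ D, (supp l).card ∈ Finset.Icc 1 n := by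
    intro l hl
    obtain ⟨h, -⟩ := (Finset.mem_filter.1 hl).2
    refine Finset.mem_Icc.2 ⟨Finset.card_pos.2 h, ?_⟩
    exact le_trans (Finset.card_le_univ _) (by simp)
  have hstep4 : ∑ l ∈ D, p (supp l).card
      = ∑ w ∈ Finset.Icc 1 n, ∑ l ∈ D.filter (fun l => (supp l).card = w), p (supp l).card :=
    (Finset.sum_fiberwise_of_maps_to hmaps _).symm
  -- step 5: card bound per w
  have hcard : ∀ w ∈ Finset.Icc 1 n,
      (D.filter (fun l => (supp l).card = w)).card ≤ n.choose w * (q - 1) ^ (w - 1) := by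
    intro w hw
    obtain ⟨hw1, hwn⟩ := Finset.mem_Icc.1 hw
    rw [Finset.card_eq_sum_card_fiberwise (f := supp)
      (t := Finset.univ.powersetCard w) (fun l hl => by
        refine Finset.mem_powersetCard.2 ⟨Finset.subset_univ _, (Finset.mem_filter.1 hl).2⟩)]
    have hbound : ∀ S ∈ Finset.univ.powersetCard w,
        ((D.filter (fun l => (supp l).card = w)).filter (fun l => supp l = S)).card
          ≤ (q - 1) ^ (w - 1) := by
      intro S hSmem
      have hScard : S.card = w := (Finset.mem_powersetCard.1 hSmem).2
      have hSne : S.Nonempty := Finset.card_pos.1 (hScard ▸ hw1)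
      refine le_trans (Finset.card_le_card ?_) (hScard ▸ hcount S hSne)
      intro l hl
      simp only [Finset.mem_filter, Finset.mem_univ, true_and] at hl ⊢
      obtain ⟨⟨hlD, -⟩, hlS⟩ := hl
      obtain ⟨h, hmin⟩ := (Finset.mem_filter.1 hlD).2
      refine ⟨hlS, ?_⟩
      have : (supp l).min' h = S.min' hSne := by simp only [hlS]
      rwa [this] at hmin
    calc ∑ S ∈ Finset.univ.powersetCard w,
          ((D.filter (fun l => (supp l).card = w)).filter (fun l => supp l = S)).card
        ≤ ∑ S ∈ Finset.univ.powersetCard w, (q - 1) ^ (w - 1) :=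
          Finset.sum_le_sum hbound
      _ = (Finset.univ.powersetCard w).card * (q - 1) ^ (w - 1) := by
          rw [Finset.sum_const, smul_eq_mul]
      _ = n.choose w * (q - 1) ^ (w - 1) := by
          rw [Finset.card_powersetCard, Finset.card_fin]
  -- conclude
  refine le_trans hstep2 ?_
  rw [hstep4]
  refine Finset.sum_le_sum fun w hw => ?_
  calc ∑ l ∈ D.filter (fun l => (supp l).card = w), p (supp l).card
      = ∑ l ∈ D.filter (fun l => (supp l).card = w), p w :=
        Finset.sum_congr rfl fun l hl => by rw [(Finset.mem_filter.1 hl).2]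
    _ = (D.filter (fun l => (supp l).card = w)).card • p w := by rw [Finset.sum_const]
    _ = ((D.filter (fun l => (supp l).card = w)).card : ENNReal) * p w := by
        rw [nsmul_eq_mul]
    _ ≤ ((n.choose w * (q - 1) ^ (w - 1) : ℕ) : ENNReal) * p w :=
        mul_le_mul_left (Nat.cast_le.2 (hcard w hw)) _
    _ = (n.choose w : ENNReal) * ((q - 1 : ℕ) : ENNReal) ^ (w - 1) * p w := by
        rw [Nat.cast_mul, Nat.cast_pow]

/-- union bound over relations counted up to proportionality:
`P[u_1,...,u_n linearly dependent] ≤ Σ_{w≥1} C(n,w) (q-1)^{w-1} P[s_w = 0]`. -/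
theorem stmt8 {F V : Type*} [Field F] [Fintype F]
    [AddCommGroup V] [Module F V] [MeasurableSpace V]
    (μ : Measure V) [IsProbabilityMeasure μ]
    (hμ : ∀ l : F, l ≠ 0 → μ.map (fun v => l • v) = μ) (n : ℕ) :
    Measure.pi (fun _ : Fin n => μ)
      {f : Fin n → V | ∃ l : Fin n → F, l ≠ 0 ∧ ∑ i, l i • f i = 0}
    ≤ ∑ w ∈ Finset.Icc 1 n,
        (n.choose w : ENNReal) * ((Fintype.card F - 1 : ℕ) : ENNReal) ^ (w - 1) *
          Measure.pi (fun _ : Fin w => μ) {f : Fin w → V | ∑ i, f i = 0} := by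
  refine stmt8_aux μ hμ n (fun e he => pi_map_comp_inj μ e he)
    (fun S c hc => measure_rel_le μ hμ S c hc
      (fun e he => pi_map_comp_inj μ e he) (fun d hd => pi_smul_le μ hμ d hd))
    (fun S hS => fiber_card_le S hS)
end

section
/- Let u_1,...,u_w be i.i.d. random k×ℓ matrices over F_q, each of the form u_i = p_i q_iᵀ with p_i uniform on F_q^k and q_i uniform on F_q^ℓ, all independent. If w ≥ k+ℓ and k ≤ ℓ, then P[u_1 + ... + u_w = 0] ≤ C_q (1 - q^{-(w-ℓ)})^{-1} q^{-kℓ}, with C_q = Π_{j≥1}(1-q^{-j})^{-1}. -/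
/-- The constant `C_q = ∏_{j≥1} (1 - q^{-j})⁻¹`. -/
noncomputable def Cq (q : ℝ) : ℝ := ∏' j : ℕ, (1 - (q ^ (j + 1))⁻¹)⁻¹

open Module Submodule Finset Matrix

section analytic

variable {Q : ℝ} (hQ2 : (2:ℝ) ≤ Q)
include hQ2

lemma Cq_factor_pos (j : ℕ) : (0:ℝ) < 1 - (Q ^ (j+1))⁻¹ := by
  have hx : (Q ^ (j+1))⁻¹ ≤ 1/2 := by
    rw [inv_le_comm₀ (by positivity) (by norm_num)]
    calc (1/2 : ℝ)⁻¹ = 2 := by norm_num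
      _ ≤ Q := hQ2
      _ ≤ Q ^ (j+1) := le_self_pow₀ (by linarith) (by omega)
  linarith

lemma Cq_factor_one_le (j : ℕ) : (1:ℝ) ≤ (1 - (Q ^ (j + 1))⁻¹)⁻¹ := by
  rw [le_inv_comm₀ one_pos (Cq_factor_pos hQ2 j)]
  have : (0:ℝ) < (Q ^ (j+1))⁻¹ := by positivity
  linarith

lemma Cq_log_summable : Summable (fun j : ℕ => Real.log ((1 - (Q ^ (j + 1))⁻¹)⁻¹)) := by
  have hQ0 : (0:ℝ) < Q := by linarith
  have hx : ∀ j : ℕ, (Q ^ (j+1))⁻¹ ≤ 1/2 := by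
    intro j
    rw [inv_le_comm₀ (by positivity) (by norm_num)]
    calc (1/2 : ℝ)⁻¹ = 2 := by norm_num
      _ ≤ Q := hQ2
      _ ≤ Q ^ (j+1) := le_self_pow₀ (by linarith) (by omega)
  have hpos := Cq_factor_pos hQ2
  have h1le := Cq_factor_one_le hQ2
  refine Summable.of_nonneg_of_le (f := fun j : ℕ => 2 * (Q⁻¹) ^ (j+1))
    (fun j => Real.log_nonneg (h1le j)) ?_ ?_
  · intro j
    have hlog := Real.log_le_sub_one_of_pos (x := (1 - (Q ^ (j + 1))⁻¹)⁻¹)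
      (lt_of_lt_of_le one_pos (h1le j))
    have hx' := hx j
    have hp := hpos j
    have hbound : (1 - (Q ^ (j + 1))⁻¹)⁻¹ - 1 ≤ 2 * (Q⁻¹) ^ (j+1) := by
      rw [inv_pow]
      set x := (Q ^ (j+1))⁻¹ with hxdef
      have hx0 : (0:ℝ) ≤ x := by rw [hxdef]; positivity
      have hinv2 : (1-x)⁻¹ ≤ 2 := by
        rw [inv_le_comm₀ hp (by norm_num)]
        linarith
      have heq : (1-x)⁻¹ - 1 = x * (1-x)⁻¹ := by
        field_simp
        ring
      rw [heq]
      calc x * (1-x)⁻¹ ≤ x * 2 := mul_le_mul_of_nonneg_left hinv2 hx0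
        _ = 2 * x := by ring
    linarith
  · apply Summable.mul_left
    apply Summable.comp_injective (summable_geometric_of_lt_one (by positivity) ?_)
      (add_left_injective 1)
    rw [inv_lt_one_iff₀]; right; linarith

lemma Cq_eq_exp : Cq Q = Real.exp (∑' j : ℕ, Real.log ((1 - (Q ^ (j+1))⁻¹)⁻¹)) := by
  rw [Cq]
  have h := Real.rexp_tsum_eq_tprod (f := fun (j : ℕ) => (1 - (Q ^ (j + 1))⁻¹)⁻¹)
    (fun j => lt_of_lt_of_le one_pos (Cq_factor_one_le hQ2 j))
    (Cq_log_summable hQ2)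
  exact h.symm

lemma finset_prod_le_Cq (s : Finset ℕ) :
    ∏ m ∈ s, (1 - (Q ^ (m+1))⁻¹)⁻¹ ≤ Cq Q := by
  rw [Cq_eq_exp hQ2]
  have heq : ∏ m ∈ s, (1 - (Q ^ (m+1))⁻¹)⁻¹
      = Real.exp (∑ m ∈ s, Real.log ((1 - (Q ^ (m+1))⁻¹)⁻¹)) := by
    rw [Real.exp_sum]
    exact Finset.prod_congr rfl (fun m _ =>
      (Real.exp_log (lt_of_lt_of_le one_pos (Cq_factor_one_le hQ2 m))).symm)
  rw [heq]
  exact Real.exp_le_exp.mpr ((Cq_log_summable hQ2).sum_le_tsum s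
    (fun i _ => Real.log_nonneg (Cq_factor_one_le hQ2 i)))

lemma Cq_one_le : (1:ℝ) ≤ Cq Q := by
  rw [Cq_eq_exp hQ2]
  exact Real.one_le_exp (tsum_nonneg
    (fun i => Real.log_nonneg (Cq_factor_one_le hQ2 i)))

lemma prod_le_Cq {k l w : ℕ} (hk : 1 ≤ k) (hw : k + l ≤ w) :
    ∏ j ∈ Finset.range l, (1 - (Q ^ (w - k - j))⁻¹)⁻¹ ≤ Cq Q := by
  have h1 : ∀ j ∈ Finset.range l,
      (1 - (Q ^ (w - k - j))⁻¹)⁻¹ = (1 - (Q ^ ((w - k - j - 1) + 1))⁻¹)⁻¹ := by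
    intro j hj
    rw [Finset.mem_range] at hj
    rw [show w - k - j - 1 + 1 = w - k - j by omega]
  rw [Finset.prod_congr rfl h1]
  have hinj : ∀ i ∈ Finset.range l, ∀ j ∈ Finset.range l,
      w - k - i - 1 = w - k - j - 1 → i = j := by
    intro i hi j hj h
    rw [Finset.mem_range] at hi hj
    omega
  exact le_trans (le_of_eq (Finset.prod_image (s := Finset.range l)
      (g := fun j => w - k - j - 1)
      (f := fun m : ℕ => (1 - (Q ^ (m + 1))⁻¹)⁻¹) hinj).symm)
    (finset_prod_le_Cq hQ2 _)

lemma factor_le_aux {k w j : ℕ} (hk : 1 ≤ k) (hjkw : j + k + 1 ≤ w) :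
    Q ^ j * (Q ^ k - 1) + Q ^ w ≤ Q ^ w * (1 - (Q ^ (w - k - j))⁻¹)⁻¹ := by
  have hQ0 : (0:ℝ) < Q := by linarith
  set m := w - k - j with hm
  have hm1 : 1 ≤ m := by omega
  have hw : w = j + k + m := by omega
  have hQm : (2:ℝ) ≤ Q ^ m :=
    le_trans hQ2 (le_self_pow₀ (by linarith) (by omega))
  set t : ℝ := (Q ^ m)⁻¹ with ht
  have ht0 : 0 < t := by rw [ht]; positivity
  have ht2 : t ≤ 1/2 := by
    rw [ht, inv_le_comm₀ (by positivity) (by norm_num)]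
    calc (1/2 : ℝ)⁻¹ = 2 := by norm_num
      _ ≤ Q ^ m := hQm
  have h1t : 0 < 1 - t := by linarith
  rw [show Q ^ w * (1 - t)⁻¹ = Q ^ w / (1 - t) by rw [div_eq_mul_inv],
    le_div_iff₀ h1t]
  have hkey : t * Q ^ w = Q ^ (j + k) := by
    rw [hw, ht, show j + k + m = (j + k) + m by ring, pow_add]
    field_simp
  have hjk : Q ^ (j+k) = Q ^ j * Q ^ k := pow_add Q j k
  have hQj : (0:ℝ) < Q ^ j := by positivity
  have hQk : (1:ℝ) ≤ Q ^ k := one_le_pow₀ (by linarith)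
  nlinarith [mul_pos hQj (lt_of_lt_of_le one_pos hQk), mul_le_of_le_one_left hQj.le (by linarith : t ≤ 1)]

end analytic

section aux

variable {F : Type*} [Field F] [Fintype F] {w : ℕ}

omit [Fintype F] in
lemma finrank_span_range_le_n {n : ℕ} (z : Fin n → (Fin w → F)) :
    finrank F (span F (Set.range z)) ≤ n := by
  classical
  refine (finrank_span_le_card _).trans ?_
  rw [Set.toFinset_card]
  simpa using Fintype.card_range_le z

lemma cardSol {n : ℕ} (z : Fin n → (Fin w → F)) :
    Nat.card {x : Fin w → F // ∀ b, ∑ i, x i * z b i = 0}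
      = Fintype.card F ^ (w - finrank F (span F (Set.range z))) := by
  classical
  have hker : ∀ x : Fin w → F,
      x ∈ LinearMap.ker (Matrix.of z).mulVecLin ↔ ∀ b, ∑ i, x i * z b i = 0 := by
    intro x
    simp [LinearMap.mem_ker, Matrix.mulVecLin_apply, Matrix.mulVec, dotProduct,
      funext_iff, mul_comm]
  have e1 : {x : Fin w → F // ∀ b, ∑ i, x i * z b i = 0} ≃
      LinearMap.ker (Matrix.of z).mulVecLin :=
    Equiv.subtypeEquivRight (fun x => (hker x).symm)
  rw [Nat.card_congr e1]
  haveI : Fintype (LinearMap.ker (Matrix.of z).mulVecLin) := Fintype.ofFinite _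
  rw [Nat.card_eq_fintype_card, card_eq_pow_finrank (K := F)]
  congr 1
  have hrn := LinearMap.finrank_range_add_finrank_ker (Matrix.of z).mulVecLin
  have hrank : finrank F (LinearMap.range (Matrix.of z).mulVecLin)
      = finrank F (span F (Set.range z)) := by
    have h2 := Matrix.rank_eq_finrank_span_cols ((Matrix.of z).transpose)
    rw [Matrix.rank_transpose] at h2
    change _ = finrank F (span F (Set.range z)) at h2
    simpa [Matrix.rank] using h2
  rw [hrank, Module.finrank_pi] at hrn
  simp only [Fintype.card_fin] at hrn
  omega

/-- the sum `∑_z q^(k(w - dim span z))` over `n`-tuples `z` of vectors. -/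
noncomputable def S (F : Type*) [Field F] [Fintype F] (k w n : ℕ) : ℝ :=
  ∑ z : Fin n → (Fin w → F),
    ((Fintype.card F : ℝ)) ^ (k * (w - finrank F (span F (Set.range z))))

lemma S_zero (k w : ℕ) : S F k w 0 = ((Fintype.card F : ℝ)) ^ (k * w) := by
  haveI : Unique (Fin 0 → Fin w → F) :=
    ⟨⟨fun x => x.elim0⟩, fun z => funext fun x => x.elim0⟩
  rw [S, Fintype.sum_unique]
  congr 2
  rw [Set.range_eq_empty, span_empty, finrank_bot, Nat.sub_zero]

lemma S_nonneg (k w n : ℕ) : 0 ≤ S F k w n := by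
  apply Finset.sum_nonneg; intro z _; positivity

lemma S_step {k w n : ℕ} (hnw : n + 1 ≤ w) :
    S F k w (n+1) * ((Fintype.card F : ℝ)) ^ k
      ≤ (((Fintype.card F : ℝ)) ^ n * (((Fintype.card F : ℝ)) ^ k - 1)
          + ((Fintype.card F : ℝ)) ^ w) * S F k w n := by
  classical
  set q : ℕ := Fintype.card F with hq
  have hq2 : 2 ≤ q := Fintype.one_lt_card
  set Q : ℝ := (q : ℝ) with hQ
  have hQ1 : (1:ℝ) ≤ Q := by
    rw [hQ]
    have : (1:ℕ) ≤ q := by omega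
    exact_mod_cast this
  have hQ0 : (0:ℝ) < Q := lt_of_lt_of_le one_pos hQ1
  have hsum : S F k w (n+1) = ∑ z : Fin n → (Fin w → F), ∑ v : Fin w → F,
      (Q) ^ (k * (w - finrank F (span F (Set.range (Fin.cons v z))))) := by
    rw [S, ← Equiv.sum_comp (Fin.consEquiv (fun _ : Fin (n+1) => Fin w → F))]
    rw [Fintype.sum_prod_type, Finset.sum_comm]
    rfl
  rw [hsum, Finset.sum_mul, S, Finset.mul_sum]
  apply Finset.sum_le_sum
  intro z _
  set U := span F (Set.range z) with hU
  set e := finrank F U with he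
  have hen : e ≤ n := finrank_span_range_le_n z
  have hew : e + 1 ≤ w := le_trans (by omega) hnw
  have hterm : ∀ v : Fin w → F,
      (Q) ^ (k * (w - finrank F (span F (Set.range (Fin.cons v z)))))
      = if v ∈ U then Q ^ (k * (w - e)) else Q ^ (k * (w - (e+1))) := by
    intro v
    have hrange : Set.range (Fin.cons v z) = insert v (Set.range z) := Fin.range_cons v z
    by_cases hv : v ∈ U
    · rw [if_pos hv]
      congr 3
      rw [hrange, span_insert_eq_span hv]
    · rw [if_neg hv]
      congr 3
      rw [hrange, span_insert, ← hU]
      have hv0 : v ≠ 0 := fun h => hv (h ▸ zero_mem U)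
      have hdisj : Disjoint (span F {v}) U := by
        rw [disjoint_comm, Submodule.disjoint_span_singleton]
        intro h; exact absurd h hv
      have hsupinf := Submodule.finrank_sup_add_finrank_inf_eq (span F {v}) U
      rw [hdisj.eq_bot, finrank_bot, finrank_span_singleton hv0] at hsupinf
      omega
  rw [Finset.sum_congr rfl (fun v _ => hterm v), Finset.sum_ite, Finset.sum_const,
    Finset.sum_const]
  have hcard1 : (univ.filter (fun v : Fin w → F => v ∈ U)).card = q ^ e := by
    rw [← Fintype.card_subtype, he, hq]
    exact card_eq_pow_finrank (K := F)
  have hcardV : (univ : Finset (Fin w → F)).card = q ^ w := by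
    rw [Finset.card_univ]
    rw [Fintype.card_fun]
    simp [hq]
  have hcard2 : (univ.filter (fun v : Fin w → F => ¬ v ∈ U)).card = q ^ w - q ^ e := by
    have h := Finset.card_filter_add_card_filter_not
      (s := (univ : Finset (Fin w → F))) (p := fun v => v ∈ U)
    omega
  rw [hcard1, hcard2]
  have hqew : q ^ e ≤ q ^ w := Nat.pow_le_pow_right (by omega) (by omega)
  have hkey : Q ^ e * (Q ^ k - 1) ≤ Q ^ n * (Q ^ k - 1) := by
    apply mul_le_mul_of_nonneg_right (pow_le_pow_right₀ hQ1 hen)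
    have : (1:ℝ) ≤ Q ^ k := one_le_pow₀ hQ1
    linarith
  set a := w - (e+1) with ha
  have hwe : w - e = a + 1 := by omega
  rw [hwe, nsmul_eq_mul, nsmul_eq_mul]
  push_cast [hqew]
  rw [show k * (a+1) = k*a + k by ring, pow_add]
  have hQQ : (q:ℝ) = Q := rfl
  rw [hQQ]
  calc ((Q:ℝ) ^ e * (Q ^ (k*a) * Q ^ k) + (Q ^ w - Q ^ e) * Q ^ (k*a)) * Q ^ k
      = (Q ^ e * Q ^ k + Q ^ w - Q ^ e) * (Q ^ (k*a) * Q ^ k) := by ring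
    _ ≤ (Q ^ n * (Q ^ k - 1) + Q ^ w) * (Q ^ (k*a) * Q ^ k) := by
        apply mul_le_mul_of_nonneg_right _ (by positivity)
        nlinarith [hkey]

lemma S_le {k w : ℕ} (n : ℕ) (hnw : n ≤ w) :
    S F k w n * ((Fintype.card F : ℝ)) ^ (k * n)
      ≤ ((Fintype.card F : ℝ)) ^ (k * w)
        * ∏ j ∈ Finset.range n,
            (((Fintype.card F : ℝ)) ^ j * (((Fintype.card F : ℝ)) ^ k - 1)
              + ((Fintype.card F : ℝ)) ^ w) := by
  set Q : ℝ := ((Fintype.card F : ℕ) : ℝ) with hQ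
  have hq2 : 2 ≤ Fintype.card F := Fintype.one_lt_card
  have hQ1 : (1:ℝ) ≤ Q := by
    rw [hQ]
    have : (1:ℕ) ≤ Fintype.card F := by omega
    exact_mod_cast this
  induction n with
  | zero => simp [S_zero, hQ]
  | succ n ih =>
    have hn : n ≤ w := by omega
    have hf : (0:ℝ) ≤ Q ^ n * (Q ^ k - 1) + Q ^ w := by
      have h1 : (1:ℝ) ≤ Q ^ k := one_le_pow₀ hQ1
      have h2 : (0:ℝ) ≤ Q ^ n := by positivity
      have h3 : (0:ℝ) ≤ Q ^ w := by positivity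
      nlinarith
    calc S F k w (n+1) * Q ^ (k * (n+1))
        = (S F k w (n+1) * Q ^ k) * Q ^ (k * n) := by
          rw [show k * (n+1) = k*n + k by ring, pow_add]; ring
      _ ≤ ((Q ^ n * (Q ^ k - 1) + Q ^ w) * S F k w n) * Q ^ (k*n) := by
          apply mul_le_mul_of_nonneg_right (S_step (by omega)) (by positivity)
      _ = (Q ^ n * (Q ^ k - 1) + Q ^ w) * (S F k w n * Q ^ (k*n)) := by ring
      _ ≤ (Q ^ n * (Q ^ k - 1) + Q ^ w)
            * (Q ^ (k * w) * ∏ j ∈ Finset.range n, (Q ^ j * (Q ^ k - 1) + Q ^ w)) := by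
          exact mul_le_mul_of_nonneg_left (ih hn) hf
      _ = Q ^ (k * w) * ∏ j ∈ Finset.range (n+1), (Q ^ j * (Q ^ k - 1) + Q ^ w) := by
          rw [Finset.prod_range_succ]; ring

lemma count_eq {k l : ℕ} :
    Nat.card {x : (Fin w → Fin k → F) × (Fin w → Fin l → F) //
        ∑ i, Matrix.vecMulVec (x.1 i) (x.2 i) = 0}
    = ∑ z : Fin l → (Fin w → F),
        (Fintype.card F) ^ (k * (w - finrank F (span F (Set.range z)))) := by
  classical
  have hC : ∀ (p : Fin w → Fin k → F) (y : Fin w → Fin l → F),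
      (∑ i, Matrix.vecMulVec (p i) (y i) = 0) ↔ ∀ a b, ∑ i, p i a * y i b = 0 := by
    intro p y
    rw [← Matrix.ext_iff]
    constructor
    · intro h a b
      have := h a b
      simpa [Matrix.sum_apply, Matrix.vecMulVec_apply] using this
    · intro h a b
      simpa [Matrix.sum_apply, Matrix.vecMulVec_apply] using h a b
  have e1 : {x : (Fin w → Fin k → F) × (Fin w → Fin l → F) //
        ∑ i, Matrix.vecMulVec (x.1 i) (x.2 i) = 0}
      ≃ Σ y : Fin w → Fin l → F,
          (Fin k → {x : Fin w → F // ∀ b, ∑ i, x i * y i b = 0}) := by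
    refine ⟨fun x => ⟨x.1.2, fun a => ⟨fun i => x.1.1 i a, fun b => ?_⟩⟩,
            fun s => ⟨(fun i a => (s.2 a).1 i, s.1), ?_⟩, fun x => rfl, fun s => ?_⟩
    · exact (hC x.1.1 x.1.2).mp x.2 a b
    · exact (hC _ _).mpr (fun a b => (s.2 a).2 b)
    · rfl
  rw [Nat.card_congr e1, Nat.card_eq_fintype_card, Fintype.card_sigma]
  have hterm : ∀ y : Fin w → Fin l → F,
      Fintype.card (Fin k → {x : Fin w → F // ∀ b, ∑ i, x i * y i b = 0})
      = (Fintype.card F) ^ (k * (w - finrank F (span F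
          (Set.range (fun b i => y i b))))) := by
    intro y
    rw [Fintype.card_fun, Fintype.card_fin, ← Nat.card_eq_fintype_card,
      cardSol (fun b i => y i b), ← pow_mul, mul_comm]
  rw [Finset.sum_congr rfl (fun y _ => hterm y)]
  exact Fintype.sum_equiv (Equiv.piComm (fun _ _ => F)) _ _ (fun y => rfl)

end aux

/-- for `w ≥ k+ℓ`, the probability that `w` i.i.d. random rank-≤1 matrices
`u_i = p_i q_iᵀ` (with `p_i, q_i` uniform) sum to zero is at most
`C_q (1 - q^{-(w-ℓ)})⁻¹ q^{-kℓ}`. -/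
theorem stmt13 {F : Type*} [Field F] [Fintype F] {k l w : ℕ}
    (hk : 1 ≤ k) (hkl : k ≤ l) (hw : k + l ≤ w) :
    (Nat.card {x : (Fin w → Fin k → F) × (Fin w → Fin l → F) //
        ∑ i, Matrix.vecMulVec (x.1 i) (x.2 i) = 0} : ℝ)
      / (Fintype.card F : ℝ) ^ ((k + l) * w)
    ≤ Cq (Fintype.card F) * (1 - ((Fintype.card F : ℝ) ^ (w - l))⁻¹)⁻¹
        * ((Fintype.card F : ℝ) ^ (k * l))⁻¹ := by
  classical
  set Q : ℝ := ((Fintype.card F : ℕ) : ℝ) with hQ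
  have hq2 : 2 ≤ Fintype.card F := Fintype.one_lt_card
  have hQ2 : (2:ℝ) ≤ Q := by rw [hQ]; exact_mod_cast hq2
  have hQ0 : (0:ℝ) < Q := by linarith
  -- the count
  have hcount : (Nat.card {x : (Fin w → Fin k → F) × (Fin w → Fin l → F) //
        ∑ i, Matrix.vecMulVec (x.1 i) (x.2 i) = 0} : ℝ) = S F k w l := by
    rw [count_eq, S]
    push_cast
    rfl
  rw [hcount]
  -- the product bound
  have hSle := S_le (F := F) (k := k) (w := w) l (by omega)
  have hprod : ∏ j ∈ Finset.range l, (Q ^ j * (Q ^ k - 1) + Q ^ w)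
      ≤ Q ^ (w * l) * Cq Q := by
    have hstep : ∏ j ∈ Finset.range l, (Q ^ j * (Q ^ k - 1) + Q ^ w)
        ≤ ∏ j ∈ Finset.range l, (Q ^ w * (1 - (Q ^ (w - k - j))⁻¹)⁻¹) := by
      apply Finset.prod_le_prod
      · intro j _
        have h1 : (1:ℝ) ≤ Q ^ k := one_le_pow₀ (by linarith)
        have h2 : (0:ℝ) ≤ Q ^ j := by positivity
        have h3 : (0:ℝ) ≤ Q ^ w := by positivity
        nlinarith
      · intro j hj
        rw [Finset.mem_range] at hj
        exact factor_le_aux hQ2 hk (by omega)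
    refine hstep.trans ?_
    rw [Finset.prod_mul_distrib, Finset.prod_const, Finset.card_range, ← pow_mul]
    exact mul_le_mul_of_nonneg_left (prod_le_Cq hQ2 hk hw) (by positivity)
  -- positivity facts
  have hC1 : (1:ℝ) ≤ Cq Q := Cq_one_le hQ2
  have hwl : 1 ≤ w - l := by omega
  have hQwl : (2:ℝ) ≤ Q ^ (w - l) :=
    le_trans hQ2 (le_self_pow₀ (by linarith) (by omega))
  have hD0 : (0:ℝ) < 1 - (Q ^ (w - l))⁻¹ := by
    have : (Q ^ (w-l))⁻¹ ≤ 1/2 := by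
      rw [inv_le_comm₀ (by positivity) (by norm_num)]
      calc (1/2 : ℝ)⁻¹ = 2 := by norm_num
        _ ≤ Q ^ (w-l) := hQwl
    linarith
  have hD1 : (1:ℝ) ≤ (1 - (Q ^ (w - l))⁻¹)⁻¹ := by
    rw [le_inv_comm₀ one_pos hD0]
    have : (0:ℝ) < (Q ^ (w-l))⁻¹ := by positivity
    linarith
  -- final assembly
  have hexp : Q ^ (k * w) * Q ^ (w * l) = Q ^ ((k + l) * w) := by
    rw [← pow_add]
    congr 1
    ring
  have hmain : S F k w l * Q ^ (k * l) ≤ Q ^ ((k + l) * w) * Cq Q := by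
    calc S F k w l * Q ^ (k * l)
        ≤ Q ^ (k * w) * ∏ j ∈ Finset.range l, (Q ^ j * (Q ^ k - 1) + Q ^ w) := hSle
      _ ≤ Q ^ (k * w) * (Q ^ (w * l) * Cq Q) :=
          mul_le_mul_of_nonneg_left hprod (by positivity)
      _ = Q ^ ((k + l) * w) * Cq Q := by rw [← hexp]; ring
  rw [div_le_iff₀ (by positivity)]
  have hgoal : S F k w l * Q ^ (k*l) ≤ Q ^ ((k + l) * w) * (Cq Q * (1 - (Q ^ (w - l))⁻¹)⁻¹) := by
    refine hmain.trans ?_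
    have h5 : Cq Q ≤ Cq Q * (1 - (Q ^ (w - l))⁻¹)⁻¹ := by
      nlinarith
    nlinarith [pow_pos hQ0 ((k+l)*w)]
  have hQkl : (0:ℝ) < Q ^ (k*l) := by positivity
  calc S F k w l = S F k w l * Q ^ (k*l) * (Q ^ (k*l))⁻¹ := by field_simp
    _ ≤ (Q ^ ((k + l) * w) * (Cq Q * (1 - (Q ^ (w - l))⁻¹)⁻¹)) * (Q ^ (k*l))⁻¹ :=
        mul_le_mul_of_nonneg_right hgoal (by positivity)
    _ = Cq Q * (1 - (Q ^ (w - l))⁻¹)⁻¹ * (Q ^ (k * l))⁻¹ * Q ^ ((k + l) * w) := by ring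
end
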